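/- Define g(m) := ∫_{−π/4}^{5π/4} (1 − 2 sin²θ)(1 − m sin²θ)^{−1/2} dθ for m ∈ (0,1). Then g is strictly decreasing on (0,1), and there exists a unique m_H ∈ (0,1) with g(m_H) = 0. -/

import Mathlib

open Real MeasureTheory Set

noncomputable section

/-- `g(m) = ∫_{−π/4}^{5π/4} (1 − 2 sin²θ)(1 − m sin²θ)^{−1/2} dθ`; its unique zero is `m_H`. -/
def gH (m : ℝ) : ℝ :=
  ∫ θ in (-(Real.pi / 4))..(5 * Real.pi / 4),
    (1 - 2 * Real.sin θ ^ 2) / Real.sqrt (1 - m * Real.sin θ ^ 2)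


def Fm (m θ : ℝ) : ℝ := (1 - 2 * Real.sin θ ^ 2) / Real.sqrt (1 - m * Real.sin θ ^ 2)

lemma s2_nonneg (θ : ℝ) : 0 ≤ sin θ ^ 2 := sq_nonneg _
lemma s2_le_one (θ : ℝ) : sin θ ^ 2 ≤ 1 := by
  nlinarith [neg_one_le_sin θ, sin_le_one θ]

lemma den_pos {m : ℝ} (h0 : 0 ≤ m) (h1 : m < 1) (θ : ℝ) : 0 < 1 - m * sin θ ^ 2 := by
  nlinarith [s2_nonneg θ, s2_le_one θ]

lemma den_pos' {m : ℝ} (h0 : 0 ≤ m) (h1 : m < 1) {s : ℝ} (hs0 : 0 ≤ s) (hs1 : s ≤ 1) :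
    0 < 1 - m * s := by nlinarith

lemma contFm {m : ℝ} (h0 : 0 ≤ m) (h1 : m < 1) : Continuous (Fm m) := by
  apply Continuous.div
  · continuity
  · continuity
  · intro θ
    exact (Real.sqrt_pos.2 (den_pos h0 h1 θ)).ne'

lemma intFm {m : ℝ} (h0 : 0 ≤ m) (h1 : m < 1) (a b : ℝ) :
    IntervalIntegrable (Fm m) volume a b :=
  (contFm h0 h1).intervalIntegrable a b

lemma one_sub_two_sin_sq (θ : ℝ) : 1 - 2 * sin θ ^ 2 = cos (2 * θ) := by
  rw [cos_two_mul', sin_sq]; ring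




def Hf (m₁ m₂ s : ℝ) : ℝ := 1 / Real.sqrt (1 - m₂ * s) - 1 / Real.sqrt (1 - m₁ * s)

lemma hasDerivAt_one_div_sqrt {m s : ℝ} (h : 0 < 1 - m * s) :
    HasDerivAt (fun t => 1 / Real.sqrt (1 - m * t)) (m / (2 * (1 - m * s) * Real.sqrt (1 - m * s))) s := by
  have hu : HasDerivAt (fun t : ℝ => 1 - m * t) (-m) s := by
    simpa using ((hasDerivAt_id s).const_mul m).const_sub 1
  have hs : HasDerivAt (fun t => Real.sqrt (1 - m * t)) (-m / (2 * Real.sqrt (1 - m * s))) s :=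
    hu.sqrt h.ne'
  have hsp : 0 < Real.sqrt (1 - m * s) := Real.sqrt_pos.2 h
  have h2 := hs.inv hsp.ne'
  have hrw : -(-m / (2 * Real.sqrt (1 - m * s))) / (Real.sqrt (1 - m * s)) ^ 2
      = m / (2 * (1 - m * s) * Real.sqrt (1 - m * s)) := by
    rw [Real.sq_sqrt h.le]; field_simp
  exact (h2.congr_of_eventuallyEq (Filter.Eventually.of_forall fun t => by simp [one_div])).congr_deriv hrw

variable {m₁ m₂ : ℝ}

lemma contOn_one_div_sqrt {m c : ℝ} (hm : ∀ s ∈ Set.Icc (0:ℝ) c, 0 < 1 - m * s) :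
    ContinuousOn (fun s => 1 / Real.sqrt (1 - m * s)) (Set.Icc (0:ℝ) c) := by
  apply ContinuousOn.div continuousOn_const
  · exact (Real.continuous_sqrt.comp (by continuity)).continuousOn
  · intro s hs
    exact (Real.sqrt_pos.2 (hm s hs)).ne'


lemma Hf_strictMonoOn (h0 : 0 < m₁) (h12 : m₁ < m₂) (h2 : m₂ < 1) :
    StrictMonoOn (Hf m₁ m₂) (Set.Icc (0:ℝ) 1) := by
  have hm₁1 : m₁ < 1 := h12.trans h2
  have pos2 : ∀ s ∈ Set.Icc (0:ℝ) 1, 0 < 1 - m₂ * s := fun s hs => by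
    nlinarith [hs.1, hs.2]
  have pos1 : ∀ s ∈ Set.Icc (0:ℝ) 1, 0 < 1 - m₁ * s := fun s hs => by
    nlinarith [hs.1, hs.2]
  apply strictMonoOn_of_deriv_pos (convex_Icc 0 1)
  · exact (contOn_one_div_sqrt pos2).sub (contOn_one_div_sqrt pos1)
  · intro s hs
    rw [interior_Icc] at hs
    have hs' : s ∈ Set.Icc (0:ℝ) 1 := ⟨hs.1.le, hs.2.le⟩
    have hu2 : 0 < 1 - m₂ * s := pos2 s hs'
    have hu1 : 0 < 1 - m₁ * s := pos1 s hs'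
    have hd : HasDerivAt (Hf m₁ m₂)
        (m₂ / (2 * (1 - m₂ * s) * Real.sqrt (1 - m₂ * s))
          - m₁ / (2 * (1 - m₁ * s) * Real.sqrt (1 - m₁ * s))) s :=
      (hasDerivAt_one_div_sqrt hu2).sub (hasDerivAt_one_div_sqrt hu1)
    rw [hd.deriv]
    have hle : 1 - m₂ * s ≤ 1 - m₁ * s := by nlinarith [hs.1]
    have hsq : Real.sqrt (1 - m₂ * s) ≤ Real.sqrt (1 - m₁ * s) := Real.sqrt_le_sqrt hle
    have hs2p : 0 < Real.sqrt (1 - m₂ * s) := Real.sqrt_pos.2 hu2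
    have hs1p : 0 < Real.sqrt (1 - m₁ * s) := Real.sqrt_pos.2 hu1
    have hden : 0 < 2 * (1 - m₂ * s) * Real.sqrt (1 - m₂ * s) := by positivity
    have key : m₁ / (2 * (1 - m₁ * s) * Real.sqrt (1 - m₁ * s))
        < m₂ / (2 * (1 - m₂ * s) * Real.sqrt (1 - m₂ * s)) := by
      apply div_lt_div₀ h12 _ (h0.trans h12).le hden
      nlinarith [mul_le_mul hle hsq hs2p.le hu1.le]
    linarith

lemma Hf_zero : Hf m₁ m₂ 0 = 0 := by simp [Hf]

lemma Hf_nonneg (h0 : 0 < m₁) (h12 : m₁ < m₂) (h2 : m₂ < 1) {s : ℝ}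
    (hs : s ∈ Set.Icc (0:ℝ) 1) : 0 ≤ Hf m₁ m₂ s := by
  rcases eq_or_lt_of_le hs.1 with h | h
  · rw [← h, Hf_zero]
  · have := Hf_strictMonoOn h0 h12 h2 (Set.left_mem_Icc.2 zero_le_one) hs h
    rw [Hf_zero] at this; exact this.le

lemma Hf_superadd (h0 : 0 < m₁) (h12 : m₁ < m₂) (h2 : m₂ < 1) {s : ℝ}
    (hs0 : 0 ≤ s) (hs : s ≤ 1/2) : 2 * Hf m₁ m₂ s ≤ Hf m₁ m₂ (2 * s) := by
  have hm₁1 : m₁ < 1 := h12.trans h2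
  have posa : ∀ μ ∈ Set.Icc (0:ℝ) m₂, 0 < 1 - μ * (2*s) := fun μ hμ => by
    nlinarith [hμ.1, hμ.2]
  have posb : ∀ μ ∈ Set.Icc (0:ℝ) m₂, 0 < 1 - μ * s := fun μ hμ => by
    nlinarith [hμ.1, hμ.2]
  have hderiv : ∀ μ ∈ interior (Set.Icc (0:ℝ) m₂),
      HasDerivAt (fun μ => 1 / Real.sqrt (1 - μ * (2*s)) - 2 * (1 / Real.sqrt (1 - μ * s)))
        ((2*s) / (2 * (1 - μ * (2*s)) * Real.sqrt (1 - μ * (2*s)))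
          - 2 * (s / (2 * (1 - μ * s) * Real.sqrt (1 - μ * s)))) μ := by
    intro μ hμ
    rw [interior_Icc] at hμ
    have hμ' : μ ∈ Set.Icc (0:ℝ) m₂ := ⟨hμ.1.le, hμ.2.le⟩
    have ha : 0 < 1 - μ * (2*s) := posa μ hμ'
    have hb : 0 < 1 - μ * s := posb μ hμ'
    have hda : HasDerivAt (fun μ => 1 / Real.sqrt (1 - μ * (2*s)))
        ((2*s) / (2 * (1 - μ * (2*s)) * Real.sqrt (1 - μ * (2*s)))) μ := by
      have h' : 0 < 1 - (2*s) * μ := by nlinarith [ha]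
      have := hasDerivAt_one_div_sqrt (m := 2*s) (s := μ) h'
      simpa [mul_comm] using this
    have hdb : HasDerivAt (fun μ => 2 * (1 / Real.sqrt (1 - μ * s)))
        (2 * (s / (2 * (1 - μ * s) * Real.sqrt (1 - μ * s)))) μ := by
      have h' : 0 < 1 - s * μ := by nlinarith [hb]
      have h2' := hasDerivAt_one_div_sqrt (m := s) (s := μ) h'
      exact (by simpa [mul_comm] using h2' :
        HasDerivAt (fun μ => 1 / Real.sqrt (1 - μ * s))
          (s / (2 * (1 - μ * s) * Real.sqrt (1 - μ * s))) μ).const_mul 2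
    exact hda.sub hdb
  have hmono : MonotoneOn
      (fun μ => 1 / Real.sqrt (1 - μ * (2*s)) - 2 * (1 / Real.sqrt (1 - μ * s)))
      (Set.Icc (0:ℝ) m₂) := by
    apply monotoneOn_of_deriv_nonneg (convex_Icc 0 m₂)
    · apply ContinuousOn.sub
      · apply ContinuousOn.div continuousOn_const
        · exact (Real.continuous_sqrt.comp (by continuity)).continuousOn
        · intro μ hμ; exact (Real.sqrt_pos.2 (posa μ hμ)).ne'
      · apply ContinuousOn.mul continuousOn_const
        apply ContinuousOn.div continuousOn_const
        · exact (Real.continuous_sqrt.comp (by continuity)).continuousOn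
        · intro μ hμ; exact (Real.sqrt_pos.2 (posb μ hμ)).ne'
    · intro μ hμ
      exact (hderiv μ hμ).differentiableAt.differentiableWithinAt
    · intro μ hμ
      rw [(hderiv μ hμ).deriv]
      rw [interior_Icc] at hμ
      have hμ' : μ ∈ Set.Icc (0:ℝ) m₂ := ⟨hμ.1.le, hμ.2.le⟩
      have ha : 0 < 1 - μ * (2*s) := posa μ hμ'
      have hb : 0 < 1 - μ * s := posb μ hμ'
      have hab : 1 - μ * (2*s) ≤ 1 - μ * s := by nlinarith [hμ.1]
      have hsq : Real.sqrt (1 - μ * (2*s)) ≤ Real.sqrt (1 - μ * s) := Real.sqrt_le_sqrt hab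
      have hap : 0 < Real.sqrt (1 - μ * (2*s)) := Real.sqrt_pos.2 ha
      have hbp : 0 < Real.sqrt (1 - μ * s) := Real.sqrt_pos.2 hb
      rcases eq_or_lt_of_le hs0 with rfl | hspos
      · simp
      · have hdenA : 0 < 2 * (1 - μ * (2*s)) * Real.sqrt (1 - μ * (2*s)) := by positivity
        have hdenB : 0 < 2 * (1 - μ * s) * Real.sqrt (1 - μ * s) := by positivity
        have hdle : 2 * (1 - μ * (2*s)) * Real.sqrt (1 - μ * (2*s))
            ≤ 2 * (1 - μ * s) * Real.sqrt (1 - μ * s) := by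
          nlinarith [mul_le_mul hab hsq hap.le hb.le]
        have key : s / (2 * (1 - μ * s) * Real.sqrt (1 - μ * s))
            ≤ s / (2 * (1 - μ * (2*s)) * Real.sqrt (1 - μ * (2*s))) :=
          div_le_div_of_nonneg_left hs0 hdenA hdle
        have hrw : (2*s) / (2 * (1 - μ * (2*s)) * Real.sqrt (1 - μ * (2*s)))
            = 2 * (s / (2 * (1 - μ * (2*s)) * Real.sqrt (1 - μ * (2*s)))) := by ring
        rw [hrw]; linarith
  have := hmono (Set.mem_Icc.2 ⟨h0.le, h12.le⟩) (Set.mem_Icc.2 ⟨(h0.trans h12).le, le_refl m₂⟩) h12.le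
  simp only [Hf]
  dsimp at this
  nlinarith [this]


lemma trig_key {x : ℝ} (hx0 : 0 < x) (hx1 : x < Real.pi/4) :
    2 * Real.sin x ^ 2 < Real.sin (x + Real.pi/4) ^ 2 := by
  have h1 : Real.sin (x + Real.pi/4) ^ 2 = 1/2 + Real.sin (2*x) / 2 := by
    rw [Real.sin_sq, Real.cos_sq]
    rw [show 2 * (x + Real.pi/4) = 2*x + Real.pi/2 by ring, Real.cos_add_pi_div_two]
    ring
  have h2 : 2 * Real.sin x ^ 2 = 1 - Real.cos (2*x) := by
    rw [Real.sin_sq, Real.cos_sq]; ring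
  rw [h1, h2]
  set y := 2*x with hy
  have hy0 : 0 < y := by positivity
  have hy1 : y < Real.pi/2 := by rw [hy]; linarith
  have hcpos : 0 < Real.cos y := Real.cos_pos_of_mem_Ioo ⟨by linarith [Real.pi_pos], hy1⟩
  have hclt : Real.cos y < 1 := by
    have := Real.strictAntiOn_cos (Set.mem_Icc.2 ⟨le_refl 0, Real.pi_pos.le⟩)
      (Set.mem_Icc.2 ⟨hy0.le, by linarith [Real.pi_pos]⟩) hy0
    simpa using this
  have hs0 : 0 ≤ Real.sin y := Real.sin_nonneg_of_nonneg_of_le_pi hy0.le (by linarith [Real.pi_pos])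
  have hs1 : Real.sin y ≤ 1 := Real.sin_le_one y
  have hpyth := Real.sin_sq_add_cos_sq y
  nlinarith [mul_pos hcpos (sub_pos.2 hclt)]

def rho (m₁ m₂ θ : ℝ) : ℝ := (1 - 2 * Real.sin θ ^ 2) * Hf m₁ m₂ (Real.sin θ ^ 2)

def psi (m₁ m₂ θ : ℝ) : ℝ := Hf m₁ m₂ (Real.cos θ ^ 2) - 2 * Hf m₁ m₂ (Real.sin θ ^ 2)

lemma contHsin (h1 : 0 ≤ m₁) (h1' : m₁ < 1) (h2 : 0 ≤ m₂) (h2' : m₂ < 1) :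
    Continuous (fun θ => Hf m₁ m₂ (Real.sin θ ^ 2)) := by
  unfold Hf
  apply Continuous.sub <;>
  · apply Continuous.div continuous_const
    · continuity
    · intro θ
      first
      | exact (Real.sqrt_pos.2 (den_pos h2 h2' θ)).ne'
      | exact (Real.sqrt_pos.2 (den_pos h1 h1' θ)).ne'

lemma contHcos (h1 : 0 ≤ m₁) (h1' : m₁ < 1) (h2 : 0 ≤ m₂) (h2' : m₂ < 1) :
    Continuous (fun θ => Hf m₁ m₂ (Real.cos θ ^ 2)) := by
  have : ∀ θ : ℝ, Hf m₁ m₂ (Real.cos θ ^ 2) = Hf m₁ m₂ (Real.sin (Real.pi/2 - θ) ^ 2) := by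
    intro θ
    rw [← Real.sin_pi_div_two_sub θ]
  simp only [this]
  exact (contHsin h1 h1' h2 h2').comp (by continuity)


lemma w_anti {x y : ℝ} (hx : 0 ≤ x) (hy : y ≤ Real.pi/2) (hxy : x ≤ y) :
    1 - 2 * Real.sin y ^ 2 ≤ 1 - 2 * Real.sin x ^ 2 := by
  have hs : Real.sin x ≤ Real.sin y := by
    apply Real.strictMonoOn_sin.monotoneOn _ _ hxy
    · constructor <;> [linarith [Real.pi_pos]; linarith]
    · constructor <;> [linarith [Real.pi_pos]; linarith]
  have hx0 : 0 ≤ Real.sin x := Real.sin_nonneg_of_nonneg_of_le_pi hx (by linarith [Real.pi_pos])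
  nlinarith

lemma psi_anti (h0 : 0 < m₁) (h12 : m₁ < m₂) (h2 : m₂ < 1) {x y : ℝ}
    (hx : 0 ≤ x) (hy : y ≤ Real.pi/4) (hxy : x ≤ y) : psi m₁ m₂ y ≤ psi m₁ m₂ x := by
  have hpi := Real.pi_pos
  have hy2 : y ≤ Real.pi/2 := by linarith
  have hs : Real.sin x ≤ Real.sin y := by
    apply Real.strictMonoOn_sin.monotoneOn _ _ hxy
    · constructor <;> linarith
    · constructor <;> linarith
  have hx0 : 0 ≤ Real.sin x := Real.sin_nonneg_of_nonneg_of_le_pi hx (by linarith)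
  have hc : Real.cos y ≤ Real.cos x := Real.cos_le_cos_of_nonneg_of_le_pi hx (by linarith) hxy
  have hcy0 : 0 ≤ Real.cos y := Real.cos_nonneg_of_mem_Icc ⟨by linarith, by linarith⟩
  have hmono := (Hf_strictMonoOn h0 h12 h2).monotoneOn
  have m1 : Real.sin x ^ 2 ∈ Set.Icc (0:ℝ) 1 := ⟨sq_nonneg _, s2_le_one x⟩
  have m2 : Real.sin y ^ 2 ∈ Set.Icc (0:ℝ) 1 := ⟨sq_nonneg _, s2_le_one y⟩
  have m3 : Real.cos x ^ 2 ∈ Set.Icc (0:ℝ) 1 := by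
    constructor
    · exact sq_nonneg _
    · nlinarith [Real.sin_sq_add_cos_sq x, sq_nonneg (Real.sin x)]
  have m4 : Real.cos y ^ 2 ∈ Set.Icc (0:ℝ) 1 := by
    constructor
    · exact sq_nonneg _
    · nlinarith [Real.sin_sq_add_cos_sq y, sq_nonneg (Real.sin y)]
  have e1 : Hf m₁ m₂ (Real.sin x ^ 2) ≤ Hf m₁ m₂ (Real.sin y ^ 2) :=
    hmono m1 m2 (by nlinarith)
  have e2 : Hf m₁ m₂ (Real.cos y ^ 2) ≤ Hf m₁ m₂ (Real.cos x ^ 2) :=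
    hmono m4 m3 (by nlinarith)
  simp only [psi]
  linarith

lemma S_pos (h0 : 0 < m₁) (h12 : m₁ < m₂) (h2 : m₂ < 1) :
    0 < ∫ θ in (0:ℝ)..(Real.pi/4), psi m₁ m₂ θ := by
  have hpi := Real.pi_pos
  have hm10 : (0:ℝ) ≤ m₁ := h0.le
  have hm11 : m₁ < 1 := h12.trans h2
  have hm20 : (0:ℝ) ≤ m₂ := (h0.trans h12).le
  have cS : Continuous (fun θ => Hf m₁ m₂ (Real.sin θ ^ 2)) := contHsin hm10 hm11 hm20 h2
  have cC : Continuous (fun θ => Hf m₁ m₂ (Real.cos θ ^ 2)) := contHcos hm10 hm11 hm20 h2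
  have cS' : Continuous (fun x => Hf m₁ m₂ (Real.sin (x + Real.pi/4) ^ 2)) :=
    cS.comp (continuous_id.add continuous_const)
  -- reflection: ∫ Hf(cos²) = ∫ Hf(sin(·+π/4)²)
  have hrefl : (∫ θ in (0:ℝ)..(Real.pi/4), Hf m₁ m₂ (Real.cos θ ^ 2))
      = ∫ x in (0:ℝ)..(Real.pi/4), Hf m₁ m₂ (Real.sin (x + Real.pi/4) ^ 2) := by
    have h := intervalIntegral.integral_comp_sub_left (a := (0:ℝ)) (b := Real.pi/4)
      (fun θ => Hf m₁ m₂ (Real.cos θ ^ 2)) (Real.pi/4)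
    rw [sub_self, sub_zero] at h
    rw [← h]
    apply intervalIntegral.integral_congr
    intro x _
    simp only
    rw [show Real.pi/4 - x = Real.pi/2 - (x + Real.pi/4) by ring, Real.cos_pi_div_two_sub]
  have hsub : (∫ θ in (0:ℝ)..(Real.pi/4), psi m₁ m₂ θ)
      = ∫ x in (0:ℝ)..(Real.pi/4),
          (Hf m₁ m₂ (Real.sin (x + Real.pi/4) ^ 2) - 2 * Hf m₁ m₂ (Real.sin x ^ 2)) := by
    unfold psi
    rw [intervalIntegral.integral_sub (g := fun θ => 2 * Hf m₁ m₂ (Real.sin θ ^ 2)) (cC.intervalIntegrable _ _)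
      ((continuous_const.mul cS).intervalIntegrable _ _), hrefl,
      ← intervalIntegral.integral_sub (g := fun θ => 2 * Hf m₁ m₂ (Real.sin θ ^ 2)) (cS'.intervalIntegrable _ _)
      ((continuous_const.mul cS).intervalIntegrable _ _)]
  rw [hsub]
  apply intervalIntegral.intervalIntegral_pos_of_pos_on
  · exact ((cS'.sub (continuous_const.mul cS))).intervalIntegrable _ _
  · intro x hx
    have hb0 : 0 < Real.sin x := Real.sin_pos_of_pos_of_lt_pi hx.1 (by linarith [hx.2])
    have hkey := trig_key hx.1 hx.2
    have ha1 : Real.sin (x + Real.pi/4) ^ 2 ≤ 1 := s2_le_one _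
    have hb1 : 2 * Real.sin x ^ 2 ∈ Set.Icc (0:ℝ) 1 := ⟨by positivity, by linarith⟩
    have ha : Real.sin (x + Real.pi/4) ^ 2 ∈ Set.Icc (0:ℝ) 1 := ⟨sq_nonneg _, ha1⟩
    have hlt : Hf m₁ m₂ (2 * Real.sin x ^ 2) < Hf m₁ m₂ (Real.sin (x + Real.pi/4) ^ 2) :=
      Hf_strictMonoOn h0 h12 h2 hb1 ha hkey
    have hsup : 2 * Hf m₁ m₂ (Real.sin x ^ 2) ≤ Hf m₁ m₂ (2 * Real.sin x ^ 2) :=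
      Hf_superadd h0 h12 h2 (sq_nonneg _) (by linarith [hb1.2])
    linarith
  · linarith

lemma J_pos (h0 : 0 < m₁) (h12 : m₁ < m₂) (h2 : m₂ < 1) :
    0 < ∫ θ in (0:ℝ)..(Real.pi/4), (1 - 2 * Real.sin θ ^ 2) * psi m₁ m₂ θ := by
  have hpi := Real.pi_pos
  have hm10 : (0:ℝ) ≤ m₁ := h0.le
  have hm11 : m₁ < 1 := h12.trans h2
  have hm20 : (0:ℝ) ≤ m₂ := (h0.trans h12).le
  have cpsi : Continuous (psi m₁ m₂) :=
    (contHcos hm10 hm11 hm20 h2).sub (continuous_const.mul (contHsin hm10 hm11 hm20 h2))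
  have cw : Continuous (fun θ : ℝ => 1 - 2 * Real.sin θ ^ 2) := by continuity
  have cwp : Continuous (fun θ => (1 - 2 * Real.sin θ ^ 2) * psi m₁ m₂ θ) := cw.mul cpsi
  -- values at endpoints
  have hpsi0 : 0 < psi m₁ m₂ 0 := by
    have h1 : Hf m₁ m₂ 0 < Hf m₁ m₂ 1 :=
      Hf_strictMonoOn h0 h12 h2 (Set.left_mem_Icc.2 zero_le_one)
        (Set.right_mem_Icc.2 zero_le_one) zero_lt_one
    rw [Hf_zero] at h1
    simp only [psi, Real.cos_zero, Real.sin_zero]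
    norm_num [Hf_zero]
    exact h1
  have hHhalf : 0 < Hf m₁ m₂ (1/2) := by
    have h1 : Hf m₁ m₂ 0 < Hf m₁ m₂ (1/2) :=
      Hf_strictMonoOn h0 h12 h2 (Set.left_mem_Icc.2 zero_le_one)
        (by constructor <;> norm_num) (by norm_num)
    rwa [Hf_zero] at h1
  have hcos4 : Real.cos (Real.pi/4) ^ 2 = 1/2 := by
    rw [Real.cos_pi_div_four]
    rw [div_pow, Real.sq_sqrt (by norm_num : (2:ℝ) ≥ 0)]
    norm_num
  have hsin4 : Real.sin (Real.pi/4) ^ 2 = 1/2 := by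
    rw [Real.sin_pi_div_four]
    rw [div_pow, Real.sq_sqrt (by norm_num : (2:ℝ) ≥ 0)]
    norm_num
  have hpsi4 : psi m₁ m₂ (Real.pi/4) = - Hf m₁ m₂ (1/2) := by
    simp only [psi, hcos4, hsin4]; ring
  -- IVT: a zero θ0 of psi
  obtain ⟨θ0, hθ0mem, hθ0⟩ : ∃ θ0 ∈ Set.Icc (0:ℝ) (Real.pi/4), psi m₁ m₂ θ0 = 0 := by
    have hIcc := intermediate_value_Icc' (by linarith : (0:ℝ) ≤ Real.pi/4) cpsi.continuousOn
    have : (0:ℝ) ∈ Set.Icc (psi m₁ m₂ (Real.pi/4)) (psi m₁ m₂ 0) := by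
      constructor
      · rw [hpsi4]; linarith
      · exact hpsi0.le
    obtain ⟨θ0, hmem, heq⟩ := hIcc this
    exact ⟨θ0, hmem, heq⟩
  have hθ0lt : θ0 < Real.pi/4 := by
    rcases lt_or_eq_of_le hθ0mem.2 with h | h
    · exact h
    · exfalso; rw [h, hpsi4] at hθ0; linarith
  have hw0 : 0 < 1 - 2 * Real.sin θ0 ^ 2 := by
    have hs : Real.sin θ0 < Real.sin (Real.pi/4) := by
      apply Real.strictMonoOn_sin _ _ hθ0lt
      · constructor <;> linarith [hθ0mem.1, hθ0mem.2]
      · constructor <;> linarith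
    have hs0 : 0 ≤ Real.sin θ0 :=
      Real.sin_nonneg_of_nonneg_of_le_pi hθ0mem.1 (by linarith [hθ0mem.2])
    rw [Real.sin_pi_div_four] at hs
    nlinarith [Real.sq_sqrt (by norm_num : (2:ℝ) ≥ 0), Real.sqrt_nonneg 2]
  -- split, compare with constant weight
  have i1 : IntervalIntegrable (fun θ => (1 - 2 * Real.sin θ ^ 2) * psi m₁ m₂ θ)
      volume 0 θ0 := cwp.intervalIntegrable _ _
  have i2 : IntervalIntegrable (fun θ => (1 - 2 * Real.sin θ ^ 2) * psi m₁ m₂ θ)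
      volume θ0 (Real.pi/4) := cwp.intervalIntegrable _ _
  have isplit := intervalIntegral.integral_add_adjacent_intervals i1 i2
  have ipsi1 : IntervalIntegrable (fun θ => (1 - 2 * Real.sin θ0 ^ 2) * psi m₁ m₂ θ)
      volume 0 θ0 := (continuous_const.mul cpsi).intervalIntegrable _ _
  have ipsi2 : IntervalIntegrable (fun θ => (1 - 2 * Real.sin θ0 ^ 2) * psi m₁ m₂ θ)
      volume θ0 (Real.pi/4) := (continuous_const.mul cpsi).intervalIntegrable _ _
  have mono1 : (∫ θ in (0:ℝ)..θ0, (1 - 2 * Real.sin θ0 ^ 2) * psi m₁ m₂ θ)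
      ≤ ∫ θ in (0:ℝ)..θ0, (1 - 2 * Real.sin θ ^ 2) * psi m₁ m₂ θ := by
    apply intervalIntegral.integral_mono_on hθ0mem.1 ipsi1 i1
    intro x hx
    have hpsix : 0 ≤ psi m₁ m₂ x := by
      have := psi_anti h0 h12 h2 hx.1 hθ0mem.2 hx.2
      rw [hθ0] at this; linarith
    have hwx := w_anti hx.1 (by linarith [hθ0mem.2] : θ0 ≤ Real.pi/2) hx.2
    nlinarith
  have mono2 : (∫ θ in θ0..(Real.pi/4), (1 - 2 * Real.sin θ0 ^ 2) * psi m₁ m₂ θ)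
      ≤ ∫ θ in θ0..(Real.pi/4), (1 - 2 * Real.sin θ ^ 2) * psi m₁ m₂ θ := by
    apply intervalIntegral.integral_mono_on hθ0lt.le ipsi2 i2
    intro x hx
    have hpsix : psi m₁ m₂ x ≤ 0 := by
      have := psi_anti h0 h12 h2 hθ0mem.1 hx.2 hx.1
      rw [hθ0] at this; linarith
    have hwx := w_anti hθ0mem.1 (by linarith [hx.2] : x ≤ Real.pi/2) hx.1
    nlinarith
  have hconst1 : (∫ θ in (0:ℝ)..θ0, (1 - 2 * Real.sin θ0 ^ 2) * psi m₁ m₂ θ)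
      = (1 - 2 * Real.sin θ0 ^ 2) * ∫ θ in (0:ℝ)..θ0, psi m₁ m₂ θ :=
    intervalIntegral.integral_const_mul _ _
  have hconst2 : (∫ θ in θ0..(Real.pi/4), (1 - 2 * Real.sin θ0 ^ 2) * psi m₁ m₂ θ)
      = (1 - 2 * Real.sin θ0 ^ 2) * ∫ θ in θ0..(Real.pi/4), psi m₁ m₂ θ :=
    intervalIntegral.integral_const_mul _ _
  have hpsiI1 : IntervalIntegrable (psi m₁ m₂) volume 0 θ0 := cpsi.intervalIntegrable _ _
  have hpsiI2 : IntervalIntegrable (psi m₁ m₂) volume θ0 (Real.pi/4) := cpsi.intervalIntegrable _ _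
  have hSsplit := intervalIntegral.integral_add_adjacent_intervals hpsiI1 hpsiI2
  have hS := S_pos h0 h12 h2
  calc (0:ℝ) < (1 - 2 * Real.sin θ0 ^ 2) * ∫ θ in (0:ℝ)..(Real.pi/4), psi m₁ m₂ θ :=
        mul_pos hw0 hS
    _ = (1 - 2 * Real.sin θ0 ^ 2) * ((∫ θ in (0:ℝ)..θ0, psi m₁ m₂ θ)
          + ∫ θ in θ0..(Real.pi/4), psi m₁ m₂ θ) := by rw [hSsplit]
    _ ≤ (∫ θ in (0:ℝ)..θ0, (1 - 2 * Real.sin θ ^ 2) * psi m₁ m₂ θ)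
          + ∫ θ in θ0..(Real.pi/4), (1 - 2 * Real.sin θ ^ 2) * psi m₁ m₂ θ := by
        rw [mul_add, ← hconst1, ← hconst2]
        exact add_le_add mono1 mono2
    _ = _ := isplit


lemma rho_integral_eq (h0 : 0 < m₁) (h12 : m₁ < m₂) (h2 : m₂ < 1) :
    (∫ θ in (-(Real.pi/4))..(5*Real.pi/4), rho m₁ m₂ θ)
      = -2 * ∫ θ in (0:ℝ)..(Real.pi/4), (1 - 2 * Real.sin θ ^ 2) * psi m₁ m₂ θ := by
  have hpi := Real.pi_pos
  have hm10 : (0:ℝ) ≤ m₁ := h0.le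
  have hm11 : m₁ < 1 := h12.trans h2
  have hm20 : (0:ℝ) ≤ m₂ := (h0.trans h12).le
  have cS : Continuous (fun θ => Hf m₁ m₂ (Real.sin θ ^ 2)) := contHsin hm10 hm11 hm20 h2
  have cC : Continuous (fun θ => Hf m₁ m₂ (Real.cos θ ^ 2)) := contHcos hm10 hm11 hm20 h2
  have cw : Continuous (fun θ : ℝ => 1 - 2 * Real.sin θ ^ 2) := by continuity
  have cR : Continuous (rho m₁ m₂) := cw.mul cS
  have cwC : Continuous (fun θ => (1 - 2 * Real.sin θ ^ 2) * Hf m₁ m₂ (Real.cos θ ^ 2)) :=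
    cw.mul cC
  -- reflection at π
  have e2 : (∫ θ in (Real.pi/2)..(5*Real.pi/4), rho m₁ m₂ θ)
      = ∫ θ in (-(Real.pi/4))..(Real.pi/2), rho m₁ m₂ θ := by
    have h := intervalIntegral.integral_comp_sub_left (a := -(Real.pi/4)) (b := Real.pi/2)
      (rho m₁ m₂) Real.pi
    rw [show Real.pi - Real.pi/2 = Real.pi/2 by ring,
      show Real.pi - -(Real.pi/4) = 5*Real.pi/4 by ring] at h
    rw [← h]
    apply intervalIntegral.integral_congr
    intro θ _
    simp only [rho, Real.sin_pi_sub]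
  -- reflection at 0
  have e3 : (∫ θ in (-(Real.pi/4))..(0:ℝ), rho m₁ m₂ θ)
      = ∫ θ in (0:ℝ)..(Real.pi/4), rho m₁ m₂ θ := by
    have h := intervalIntegral.integral_comp_neg (a := (0:ℝ)) (b := Real.pi/4) (rho m₁ m₂)
    rw [neg_zero] at h
    rw [← h]
    apply intervalIntegral.integral_congr
    intro θ _
    simp only [rho, Real.sin_neg, neg_sq]
  -- reflection at π/2
  have e4 : (∫ θ in (Real.pi/4)..(Real.pi/2), rho m₁ m₂ θ)
      = -∫ θ in (0:ℝ)..(Real.pi/4), (1 - 2 * Real.sin θ ^ 2) * Hf m₁ m₂ (Real.cos θ ^ 2) := by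
    have h := intervalIntegral.integral_comp_sub_left (a := (0:ℝ)) (b := Real.pi/4)
      (rho m₁ m₂) (Real.pi/2)
    rw [show Real.pi/2 - Real.pi/4 = Real.pi/4 by ring, sub_zero] at h
    rw [← h, ← intervalIntegral.integral_neg]
    apply intervalIntegral.integral_congr
    intro θ _
    simp only [rho, Real.sin_pi_div_two_sub]
    have hpyth : Real.cos θ ^ 2 = 1 - Real.sin θ ^ 2 := by
      linear_combination Real.sin_sq_add_cos_sq θ
    rw [hpyth]
    ring_nf
  have a1 : (∫ θ in (-(Real.pi/4))..(0:ℝ), rho m₁ m₂ θ)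
      + ∫ θ in (0:ℝ)..(Real.pi/2), rho m₁ m₂ θ
      = ∫ θ in (-(Real.pi/4))..(Real.pi/2), rho m₁ m₂ θ :=
    intervalIntegral.integral_add_adjacent_intervals
      (cR.intervalIntegrable _ _) (cR.intervalIntegrable _ _)
  have a2 : (∫ θ in (0:ℝ)..(Real.pi/4), rho m₁ m₂ θ)
      + ∫ θ in (Real.pi/4)..(Real.pi/2), rho m₁ m₂ θ
      = ∫ θ in (0:ℝ)..(Real.pi/2), rho m₁ m₂ θ :=
    intervalIntegral.integral_add_adjacent_intervals
      (cR.intervalIntegrable _ _) (cR.intervalIntegrable _ _)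
  have a3 : (∫ θ in (-(Real.pi/4))..(Real.pi/2), rho m₁ m₂ θ)
      + ∫ θ in (Real.pi/2)..(5*Real.pi/4), rho m₁ m₂ θ
      = ∫ θ in (-(Real.pi/4))..(5*Real.pi/4), rho m₁ m₂ θ :=
    intervalIntegral.integral_add_adjacent_intervals
      (cR.intervalIntegrable _ _) (cR.intervalIntegrable _ _)
  -- J in terms of A and C
  have hJ : (∫ θ in (0:ℝ)..(Real.pi/4), (1 - 2 * Real.sin θ ^ 2) * psi m₁ m₂ θ)
      = (∫ θ in (0:ℝ)..(Real.pi/4), (1 - 2 * Real.sin θ ^ 2) * Hf m₁ m₂ (Real.cos θ ^ 2))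
        - 2 * ∫ θ in (0:ℝ)..(Real.pi/4), rho m₁ m₂ θ := by
    have hptwise : ∀ θ : ℝ, (1 - 2 * Real.sin θ ^ 2) * psi m₁ m₂ θ
        = (1 - 2 * Real.sin θ ^ 2) * Hf m₁ m₂ (Real.cos θ ^ 2) - 2 * rho m₁ m₂ θ := by
      intro θ; simp only [psi, rho]; ring
    rw [intervalIntegral.integral_congr (a := (0:ℝ)) (b := Real.pi/4)
        (g := fun θ => (1 - 2 * Real.sin θ ^ 2) * Hf m₁ m₂ (Real.cos θ ^ 2) - 2 * rho m₁ m₂ θ)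
        (fun θ _ => hptwise θ),
      intervalIntegral.integral_sub (g := fun θ => 2 * rho m₁ m₂ θ) (cwC.intervalIntegrable _ _)
        ((continuous_const.mul cR).intervalIntegrable _ _),
      intervalIntegral.integral_const_mul]
  linarith [a1, a2, a3, e2, e3, e4, hJ]

theorem gH_strictAntiOn : StrictAntiOn gH (Set.Ioo (0:ℝ) 1) := by
  intro m₁ hm₁ m₂ hm₂ h12
  have h0 : 0 < m₁ := hm₁.1
  have h2 : m₂ < 1 := hm₂.2
  have hm11 : m₁ < 1 := hm₁.2
  have hm20 : (0:ℝ) ≤ m₂ := hm₂.1.le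
  have hJ := J_pos h0 h12 h2
  have hrho := rho_integral_eq h0 h12 h2
  have hneg : (∫ θ in (-(Real.pi/4))..(5*Real.pi/4), rho m₁ m₂ θ) < 0 := by
    rw [hrho]; linarith
  have hdiff : gH m₁ - gH m₂ = -(∫ θ in (-(Real.pi/4))..(5*Real.pi/4), rho m₁ m₂ θ) := by
    have hgh : ∀ m : ℝ, gH m = ∫ θ in (-(Real.pi/4))..(5*Real.pi/4), Fm m θ := fun m => rfl
    rw [hgh, hgh, ← intervalIntegral.integral_sub (intFm h0.le hm11 _ _)
      (intFm hm20 h2 _ _), ← intervalIntegral.integral_neg]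
    apply intervalIntegral.integral_congr
    intro θ _
    simp only [Fm, rho, Hf]
    ring
  linarith


-- ∫ (1 - 2 sin²θ) over a..b
lemma integral_w (a b : ℝ) :
    (∫ θ in a..b, (1 - 2 * Real.sin θ ^ 2)) = (Real.sin (2*b) - Real.sin (2*a)) / 2 := by
  have h : ∀ x ∈ Set.uIcc a b, HasDerivAt (fun θ => Real.sin (2*θ) / 2)
      (1 - 2 * Real.sin x ^ 2) x := by
    intro x _
    have h1 : HasDerivAt (fun θ : ℝ => 2*θ) 2 x := by
      simpa using (hasDerivAt_id x).const_mul 2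
    have h2 := (Real.hasDerivAt_sin (2*x)).comp x h1
    have h3 := h2.div_const 2
    have : Real.cos (2*x) * 2 / 2 = 1 - 2 * Real.sin x ^ 2 := by
      rw [← one_sub_two_sin_sq]; ring
    rwa [this] at h3
  rw [intervalIntegral.integral_eq_sub_of_hasDerivAt h (by apply Continuous.intervalIntegrable; continuity)]
  ring

-- basic sqrt bound helpers
lemma Fm_le_of_neg {m γ c q : ℝ} (hm : 0 ≤ m) (hm1 : m < 1) (hγ : 0 ≤ γ) (hc : 0 ≤ c)
    {θ : ℝ} (hcos : Real.cos (2*θ) ≤ -γ) (hq : 1 - m*(1+γ)/2 ≤ q) (hcq : c^2 * q ≤ 1)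
    (hqpos : 0 < q) : Fm m θ ≤ -(γ*c) := by
  have hs : Real.sin θ ^ 2 = (1 - Real.cos (2*θ))/2 := by
    rw [← one_sub_two_sin_sq]; ring
  have hd : 0 < 1 - m * Real.sin θ ^ 2 := den_pos hm hm1 θ
  have hdq : 1 - m * Real.sin θ ^ 2 ≤ q := by
    rw [hs]; nlinarith
  have hsd : 0 < Real.sqrt (1 - m * Real.sin θ ^ 2) := Real.sqrt_pos.2 hd
  have hsq : Real.sqrt (1 - m * Real.sin θ ^ 2) ≤ Real.sqrt q := Real.sqrt_le_sqrt hdq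
  have hsqq : 0 < Real.sqrt q := Real.sqrt_pos.2 hqpos
  have hcsq : c * Real.sqrt q ≤ 1 := by
    nlinarith [Real.sq_sqrt hqpos.le, Real.sqrt_nonneg q]
  have hc1 : c ≤ 1 / Real.sqrt q := (le_div_iff₀ hsqq).2 hcsq
  have hc2 : (1:ℝ) / Real.sqrt q ≤ 1 / Real.sqrt (1 - m * Real.sin θ ^ 2) :=
    div_le_div_of_nonneg_left zero_le_one hsd hsq
  have ha : 1 - 2 * Real.sin θ ^ 2 ≤ -γ := by rw [one_sub_two_sin_sq]; exact hcos
  have ha0 : 1 - 2 * Real.sin θ ^ 2 ≤ 0 := le_trans ha (by linarith)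
  have key : (1 - 2 * Real.sin θ ^ 2) * (1 / Real.sqrt (1 - m * Real.sin θ ^ 2))
      ≤ (1 - 2 * Real.sin θ ^ 2) * c :=
    mul_le_mul_of_nonpos_left (le_trans hc1 hc2) ha0
  have : Fm m θ = (1 - 2 * Real.sin θ ^ 2) * (1 / Real.sqrt (1 - m * Real.sin θ ^ 2)) := by
    rw [Fm]; ring
  rw [this]
  calc (1 - 2 * Real.sin θ ^ 2) * (1 / Real.sqrt (1 - m * Real.sin θ ^ 2))
      ≤ (1 - 2 * Real.sin θ ^ 2) * c := key
    _ ≤ (-γ) * c := mul_le_mul_of_nonneg_right ha hc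
    _ = -(γ*c) := by ring

lemma Fm_nonpos {m : ℝ} (hm : 0 ≤ m) (hm1 : m < 1) {θ : ℝ}
    (hcos : Real.cos (2*θ) ≤ 0) : Fm m θ ≤ 0 := by
  apply div_nonpos_of_nonpos_of_nonneg
  · rw [one_sub_two_sin_sq]; exact hcos
  · exact Real.sqrt_nonneg _

lemma Fm_le_pos {m : ℝ} (hm : 0 ≤ m) (hm1 : m < 1) {θ : ℝ}
    (hcos : 0 ≤ Real.cos (2*θ)) : Fm m θ ≤ Real.sqrt 2 * (1 - 2 * Real.sin θ ^ 2) := by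
  have hs : Real.sin θ ^ 2 ≤ 1/2 := by
    have : (0:ℝ) ≤ 1 - 2*Real.sin θ ^ 2 := by rw [one_sub_two_sin_sq]; exact hcos
    linarith
  have hd : 0 < 1 - m * Real.sin θ ^ 2 := den_pos hm hm1 θ
  have hd2 : (1:ℝ)/2 ≤ 1 - m * Real.sin θ ^ 2 := by nlinarith [sq_nonneg (Real.sin θ)]
  have hsd : 0 < Real.sqrt (1 - m * Real.sin θ ^ 2) := Real.sqrt_pos.2 hd
  have ha : 0 ≤ 1 - 2 * Real.sin θ ^ 2 := by rw [one_sub_two_sin_sq]; exact hcos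
  rw [Fm, div_le_iff₀ hsd]
  have h2d : 1 ≤ Real.sqrt 2 * Real.sqrt (1 - m * Real.sin θ ^ 2) := by
    rw [← Real.sqrt_mul (by norm_num : (0:ℝ) ≤ 2)]
    rw [Real.one_le_sqrt]
    linarith
  nlinarith

lemma Fm_ge_pos {m : ℝ} (hm : 0 ≤ m) (hm1 : m < 1) {θ : ℝ}
    (hcos : 0 ≤ Real.cos (2*θ)) : (1 - 2 * Real.sin θ ^ 2) ≤ Fm m θ := by
  have hd : 0 < 1 - m * Real.sin θ ^ 2 := den_pos hm hm1 θ
  have hd1 : 1 - m * Real.sin θ ^ 2 ≤ 1 := by nlinarith [sq_nonneg (Real.sin θ)]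
  have hsd : 0 < Real.sqrt (1 - m * Real.sin θ ^ 2) := Real.sqrt_pos.2 hd
  have hsd1 : Real.sqrt (1 - m * Real.sin θ ^ 2) ≤ 1 := by
    exact Real.sqrt_le_one.2 hd1
  have ha : 0 ≤ 1 - 2 * Real.sin θ ^ 2 := by rw [one_sub_two_sin_sq]; exact hcos
  calc 1 - 2 * Real.sin θ ^ 2 = (1 - 2 * Real.sin θ ^ 2)/1 := (div_one _).symm
    _ ≤ Fm m θ := div_le_div_of_nonneg_left ha hsd hsd1

lemma Fm_ge_neg {m : ℝ} (hm : 0 ≤ m) (hm1 : m ≤ 1/2) {θ : ℝ}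
    (hcos : Real.cos (2*θ) ≤ 0) : Real.sqrt 2 * (1 - 2 * Real.sin θ ^ 2) ≤ Fm m θ := by
  have hd : 0 < 1 - m * Real.sin θ ^ 2 := den_pos hm (by linarith) θ
  have hd2 : (1:ℝ)/2 ≤ 1 - m * Real.sin θ ^ 2 := by
    nlinarith [sq_nonneg (Real.sin θ), s2_le_one θ]
  have hsd : 0 < Real.sqrt (1 - m * Real.sin θ ^ 2) := Real.sqrt_pos.2 hd
  have ha : 1 - 2 * Real.sin θ ^ 2 ≤ 0 := by rw [one_sub_two_sin_sq]; exact hcos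
  rw [Fm, le_div_iff₀ hsd]
  have h2d : 1 ≤ Real.sqrt 2 * Real.sqrt (1 - m * Real.sin θ ^ 2) := by
    rw [← Real.sqrt_mul (by norm_num : (0:ℝ) ≤ 2), Real.one_le_sqrt]
    linarith
  nlinarith [Real.sqrt_nonneg 2, Real.sqrt_nonneg (1 - m * Real.sin θ ^ 2)]

lemma cos_near_pi {x δ : ℝ} (hδ : δ ≤ Real.pi) (h : |x - Real.pi| ≤ δ) :
    Real.cos x ≤ -Real.cos δ := by
  have h1 : Real.cos x = -Real.cos (x - Real.pi) := by
    rw [Real.cos_sub_pi, neg_neg]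
  rw [h1, neg_le_neg_iff]
  rw [← Real.cos_abs (x - Real.pi)]
  exact Real.cos_le_cos_of_nonneg_of_le_pi (abs_nonneg _) hδ h


lemma sin_two_neg_pi_div_four : Real.sin (2 * -(Real.pi/4)) = -1 := by
  rw [show 2 * -(Real.pi/4) = -(Real.pi/2) by ring, Real.sin_neg, Real.sin_pi_div_two]

lemma sin_two_pi_div_four : Real.sin (2 * (Real.pi/4)) = 1 := by
  rw [show 2 * (Real.pi/4) = Real.pi/2 by ring, Real.sin_pi_div_two]

lemma sin_two_three_pi_div_four : Real.sin (2 * (3*Real.pi/4)) = -1 := by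
  rw [show 2 * (3*Real.pi/4) = Real.pi/2 + Real.pi by ring, Real.sin_add_pi, Real.sin_pi_div_two]

lemma sin_two_five_pi_div_four : Real.sin (2 * (5*Real.pi/4)) = 1 := by
  rw [show 2 * (5*Real.pi/4) = Real.pi/2 + 2*Real.pi by ring, Real.sin_add_two_pi,
    Real.sin_pi_div_two]

lemma sqrt_two_lt_two : Real.sqrt 2 < 2 := by
  nlinarith [Real.sq_sqrt (by norm_num : (0:ℝ) ≤ 2), Real.sqrt_nonneg 2]

lemma gH_pos_half : 0 < gH (1/2) := by
  have hpi := Real.pi_pos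
  have hm0 : (0:ℝ) ≤ 1/2 := by norm_num
  have hm1 : (1/2:ℝ) < 1 := by norm_num
  have cw : Continuous (fun θ : ℝ => 1 - 2 * Real.sin θ ^ 2) := by continuity
  -- piece 1
  have P1 : (1:ℝ) ≤ ∫ θ in (-(Real.pi/4))..(Real.pi/4), Fm (1/2) θ := by
    have hmono : (∫ θ in (-(Real.pi/4))..(Real.pi/4), (1 - 2 * Real.sin θ ^ 2))
        ≤ ∫ θ in (-(Real.pi/4))..(Real.pi/4), Fm (1/2) θ := by
      apply intervalIntegral.integral_mono_on (by linarith) (cw.intervalIntegrable _ _)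
        (intFm hm0 hm1 _ _)
      intro x hx
      apply Fm_ge_pos hm0 hm1
      apply Real.cos_nonneg_of_mem_Icc
      constructor <;> [linarith [hx.1]; linarith [hx.2]]
    rw [integral_w, sin_two_pi_div_four, sin_two_neg_pi_div_four] at hmono
    norm_num at hmono
    exact hmono
  -- piece 2
  have P2 : -Real.sqrt 2 ≤ ∫ θ in (Real.pi/4)..(3*Real.pi/4), Fm (1/2) θ := by
    have hmono : (∫ θ in (Real.pi/4)..(3*Real.pi/4), Real.sqrt 2 * (1 - 2 * Real.sin θ ^ 2))
        ≤ ∫ θ in (Real.pi/4)..(3*Real.pi/4), Fm (1/2) θ := by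
      apply intervalIntegral.integral_mono_on (by linarith)
        ((continuous_const.mul cw).intervalIntegrable _ _) (intFm hm0 hm1 _ _)
      intro x hx
      apply Fm_ge_neg hm0 (le_refl _)
      apply Real.cos_nonpos_of_pi_div_two_le_of_le
      · linarith [hx.1]
      · linarith [hx.2]
    rw [intervalIntegral.integral_const_mul, integral_w, sin_two_pi_div_four,
      sin_two_three_pi_div_four] at hmono
    norm_num at hmono
    linarith [hmono]
  -- piece 3
  have P3 : (1:ℝ) ≤ ∫ θ in (3*Real.pi/4)..(5*Real.pi/4), Fm (1/2) θ := by
    have hmono : (∫ θ in (3*Real.pi/4)..(5*Real.pi/4), (1 - 2 * Real.sin θ ^ 2))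
        ≤ ∫ θ in (3*Real.pi/4)..(5*Real.pi/4), Fm (1/2) θ := by
      apply intervalIntegral.integral_mono_on (by linarith) (cw.intervalIntegrable _ _)
        (intFm hm0 hm1 _ _)
      intro x hx
      apply Fm_ge_pos hm0 hm1
      rw [← Real.cos_sub_two_pi]
      apply Real.cos_nonneg_of_mem_Icc
      constructor <;> [linarith [hx.1]; linarith [hx.2]]
    rw [integral_w, sin_two_three_pi_div_four, sin_two_five_pi_div_four] at hmono
    norm_num at hmono
    exact hmono
  have split1 := intervalIntegral.integral_add_adjacent_intervals
    (intFm hm0 hm1 (-(Real.pi/4)) (Real.pi/4)) (intFm hm0 hm1 (Real.pi/4) (3*Real.pi/4))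
  have split2 := intervalIntegral.integral_add_adjacent_intervals
    ((intFm hm0 hm1 (-(Real.pi/4)) (Real.pi/4)).trans (intFm hm0 hm1 (Real.pi/4) (3*Real.pi/4)))
    (intFm hm0 hm1 (3*Real.pi/4) (5*Real.pi/4))
  have hgh : gH (1/2) = ∫ θ in (-(Real.pi/4))..(5*Real.pi/4), Fm (1/2) θ := rfl
  rw [hgh, ← split2, ← split1]
  linarith [sqrt_two_lt_two]


lemma sqrt_two_le : Real.sqrt 2 ≤ 1.4143 := by
  nlinarith [Real.sq_sqrt (by norm_num : (0:ℝ) ≤ 2), Real.sqrt_nonneg 2]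

lemma sqrt_three_ge : (1.732:ℝ) ≤ Real.sqrt 3 := by
  nlinarith [Real.sq_sqrt (by norm_num : (0:ℝ) ≤ 3), Real.sqrt_nonneg 3]

lemma cos_pi_div_twelve_ge : (0.9659:ℝ) ≤ Real.cos (Real.pi/12) := by
  rw [show Real.pi/12 = Real.pi/3 - Real.pi/4 by ring, Real.cos_sub, Real.cos_pi_div_three,
    Real.sin_pi_div_three, Real.cos_pi_div_four, Real.sin_pi_div_four]
  have h2 : (1.41421:ℝ) ≤ Real.sqrt 2 := by
    nlinarith [Real.sq_sqrt (by norm_num : (0:ℝ) ≤ 2), Real.sqrt_nonneg 2]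
  have h3 : (1.73205:ℝ) ≤ Real.sqrt 3 := by
    nlinarith [Real.sq_sqrt (by norm_num : (0:ℝ) ≤ 3), Real.sqrt_nonneg 3]
  nlinarith [mul_le_mul h3 h2 (by norm_num) (Real.sqrt_nonneg 3)]

lemma cos_pi_div_twelve_le_pi : Real.pi/12 ≤ Real.pi := by linarith [Real.pi_pos]

lemma p3_lemma : (5.441237:ℝ) ≤ Real.sqrt 3 * Real.pi := by
  have h3ge := sqrt_three_ge
  have hpige : (3.141592:ℝ) ≤ Real.pi := Real.pi_gt_d6.le
  nlinarith [mul_le_mul h3ge hpige (by norm_num) (Real.sqrt_nonneg 3)]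

lemma p5_lemma : (3.034463:ℝ) ≤ Real.cos (Real.pi/12) * Real.pi := by
  have hγ5 := cos_pi_div_twelve_ge
  have hpige : (3.141592:ℝ) ≤ Real.pi := Real.pi_gt_d6.le
  nlinarith [mul_le_mul hγ5 hpige (by norm_num) (by linarith : (0:ℝ) ≤ Real.cos (Real.pi/12))]

lemma gH_neg : gH (999/1000) < 0 := by
  have hpi := Real.pi_pos
  have hm0 : (0:ℝ) ≤ 999/1000 := by norm_num
  have hm1 : (999/1000:ℝ) < 1 := by norm_num
  have cw : Continuous (fun θ : ℝ => 1 - 2 * Real.sin θ ^ 2) := by continuity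
  set m : ℝ := 999/1000 with hm
  -- positive window bound (two of them)
  have B1 : (∫ θ in (-(Real.pi/4))..(Real.pi/4), Fm m θ) ≤ Real.sqrt 2 := by
    have hmono : (∫ θ in (-(Real.pi/4))..(Real.pi/4), Fm m θ)
        ≤ ∫ θ in (-(Real.pi/4))..(Real.pi/4), Real.sqrt 2 * (1 - 2 * Real.sin θ ^ 2) := by
      apply intervalIntegral.integral_mono_on (by linarith) (intFm hm0 hm1 _ _)
        ((continuous_const.mul cw).intervalIntegrable _ _)
      intro x hx
      apply Fm_le_pos hm0 hm1
      apply Real.cos_nonneg_of_mem_Icc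
      constructor <;> [linarith [hx.1]; linarith [hx.2]]
    rw [intervalIntegral.integral_const_mul, integral_w, sin_two_pi_div_four,
      sin_two_neg_pi_div_four] at hmono
    norm_num at hmono
    exact hmono
  have B9 : (∫ θ in (3*Real.pi/4)..(5*Real.pi/4), Fm m θ) ≤ Real.sqrt 2 := by
    have hmono : (∫ θ in (3*Real.pi/4)..(5*Real.pi/4), Fm m θ)
        ≤ ∫ θ in (3*Real.pi/4)..(5*Real.pi/4), Real.sqrt 2 * (1 - 2 * Real.sin θ ^ 2) := by
      apply intervalIntegral.integral_mono_on (by linarith) (intFm hm0 hm1 _ _)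
        ((continuous_const.mul cw).intervalIntegrable _ _)
      intro x hx
      apply Fm_le_pos hm0 hm1
      rw [← Real.cos_sub_two_pi]
      apply Real.cos_nonneg_of_mem_Icc
      constructor <;> [linarith [hx.1]; linarith [hx.2]]
    rw [intervalIntegral.integral_const_mul, integral_w, sin_two_three_pi_div_four,
      sin_two_five_pi_div_four] at hmono
    norm_num at hmono
    exact hmono
  -- nonpositive windows
  have B2 : (∫ θ in (Real.pi/4)..(Real.pi/3), Fm m θ) ≤ 0 := by
    have hmono : (∫ θ in (Real.pi/4)..(Real.pi/3), Fm m θ)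
        ≤ ∫ θ in (Real.pi/4)..(Real.pi/3), (0:ℝ) := by
      apply intervalIntegral.integral_mono_on (by linarith) (intFm hm0 hm1 _ _)
        (continuous_const.intervalIntegrable _ _)
      intro x hx
      apply Fm_nonpos hm0 hm1
      apply Real.cos_nonpos_of_pi_div_two_le_of_le
      · linarith [hx.1]
      · linarith [hx.2]
    simpa using hmono
  have B8 : (∫ θ in (2*Real.pi/3)..(3*Real.pi/4), Fm m θ) ≤ 0 := by
    have hmono : (∫ θ in (2*Real.pi/3)..(3*Real.pi/4), Fm m θ)
        ≤ ∫ θ in (2*Real.pi/3)..(3*Real.pi/4), (0:ℝ) := by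
      apply intervalIntegral.integral_mono_on (by linarith) (intFm hm0 hm1 _ _)
        (continuous_const.intervalIntegrable _ _)
      intro x hx
      apply Fm_nonpos hm0 hm1
      apply Real.cos_nonpos_of_pi_div_two_le_of_le
      · linarith [hx.1]
      · linarith [hx.2]
    simpa using hmono
  -- strongly negative windows
  have hwin : ∀ (l r γ c q : ℝ), l ≤ r → 0 ≤ γ → 0 ≤ c → (∀ x ∈ Set.Icc l r, Real.cos (2*x) ≤ -γ) →
      1 - m*(1+γ)/2 ≤ q → c^2 * q ≤ 1 → 0 < q →
      (∫ θ in l..r, Fm m θ) ≤ (r - l) * (-(γ*c)) := by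
    intro l r γ c q hlr hγ hc hcos hq hcq hqpos
    have hmono : (∫ θ in l..r, Fm m θ) ≤ ∫ θ in l..r, (-(γ*c) : ℝ) := by
      apply intervalIntegral.integral_mono_on hlr (intFm hm0 hm1 _ _)
        (continuous_const.intervalIntegrable _ _)
      intro x hx
      exact Fm_le_of_neg hm0 hm1 hγ hc (hcos x hx) hq hcq hqpos
    rwa [intervalIntegral.integral_const, smul_eq_mul] at hmono
  have B3 : (∫ θ in (Real.pi/3)..(5*Real.pi/12), Fm m θ)
      ≤ (5*Real.pi/12 - Real.pi/3) * (-((1/2)*(199/100))) := by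
    apply hwin _ _ _ _ (1003/4000) (by linarith) (by norm_num) (by norm_num)
    · intro x hx
      have h := cos_near_pi (x := 2*x) (δ := Real.pi/3) (by linarith)
        (abs_le.2 ⟨by linarith [hx.1], by linarith [hx.2]⟩)
      rwa [Real.cos_pi_div_three] at h
    · rw [hm]; norm_num
    · norm_num
    · norm_num
  have B7 : (∫ θ in (7*Real.pi/12)..(2*Real.pi/3), Fm m θ)
      ≤ (2*Real.pi/3 - 7*Real.pi/12) * (-((1/2)*(199/100))) := by
    apply hwin _ _ _ _ (1003/4000) (by linarith) (by norm_num) (by norm_num)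
    · intro x hx
      have h := cos_near_pi (x := 2*x) (δ := Real.pi/3) (by linarith)
        (abs_le.2 ⟨by linarith [hx.1], by linarith [hx.2]⟩)
      rwa [Real.cos_pi_div_three] at h
    · rw [hm]; norm_num
    · norm_num
    · norm_num
  have hq4 : 1 - m*(1+Real.sqrt 3/2)/2 ≤ 17/250 := by
    have h3 := sqrt_three_ge
    rw [hm]; nlinarith
  have hcq4 : (19/5:ℝ)^2 * (17/250) ≤ 1 := by norm_num
  have B4 : (∫ θ in (5*Real.pi/12)..(11*Real.pi/24), Fm m θ)
      ≤ (11*Real.pi/24 - 5*Real.pi/12) * (-((Real.sqrt 3/2)*(19/5))) := by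
    apply hwin _ _ _ _ (17/250) (by linarith) (by positivity) (by norm_num) _ hq4 hcq4 (by norm_num)
    intro x hx
    have h := cos_near_pi (x := 2*x) (δ := Real.pi/6) (by linarith)
      (abs_le.2 ⟨by linarith [hx.1], by linarith [hx.2]⟩)
    rwa [Real.cos_pi_div_six] at h
  have B6 : (∫ θ in (13*Real.pi/24)..(7*Real.pi/12), Fm m θ)
      ≤ (7*Real.pi/12 - 13*Real.pi/24) * (-((Real.sqrt 3/2)*(19/5))) := by
    apply hwin _ _ _ _ (17/250) (by linarith) (by positivity) (by norm_num) _ hq4 hcq4 (by norm_num)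
    intro x hx
    have h := cos_near_pi (x := 2*x) (δ := Real.pi/6) (by linarith)
      (abs_le.2 ⟨by linarith [hx.1], by linarith [hx.2]⟩)
    rwa [Real.cos_pi_div_six] at h
  have hγ5 := cos_pi_div_twelve_ge
  have hq5 : 1 - m*(1+Real.cos (Real.pi/12))/2 ≤ 451/25000 := by
    rw [hm]; nlinarith [hγ5]
  have hcq5 : (186/25:ℝ)^2 * (451/25000) ≤ 1 := by norm_num
  have B5 : (∫ θ in (11*Real.pi/24)..(13*Real.pi/24), Fm m θ)
      ≤ (13*Real.pi/24 - 11*Real.pi/24) * (-((Real.cos (Real.pi/12))*(186/25))) := by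
    apply hwin _ _ _ _ (451/25000) (by linarith) (by linarith) (by norm_num) _ hq5 hcq5 (by norm_num)
    intro x hx
    exact cos_near_pi (x := 2*x) (δ := Real.pi/12) (by linarith)
      (abs_le.2 ⟨by linarith [hx.1], by linarith [hx.2]⟩)
  -- assemble
  have i : ∀ a b : ℝ, IntervalIntegrable (Fm m) volume a b := intFm hm0 hm1
  have s1 := intervalIntegral.integral_add_adjacent_intervals
    (i (-(Real.pi/4)) (Real.pi/4)) (i (Real.pi/4) (Real.pi/3))
  have s2 := intervalIntegral.integral_add_adjacent_intervals
    (i (-(Real.pi/4)) (Real.pi/3))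
    (i (Real.pi/3) (5*Real.pi/12))
  have s3 := intervalIntegral.integral_add_adjacent_intervals
    (i (-(Real.pi/4)) (5*Real.pi/12))
    (i (5*Real.pi/12) (11*Real.pi/24))
  have s4 := intervalIntegral.integral_add_adjacent_intervals
    (i (-(Real.pi/4)) (11*Real.pi/24))
    (i (11*Real.pi/24) (13*Real.pi/24))
  have s5 := intervalIntegral.integral_add_adjacent_intervals
    (i (-(Real.pi/4)) (13*Real.pi/24))
    (i (13*Real.pi/24) (7*Real.pi/12))
  have s6 := intervalIntegral.integral_add_adjacent_intervals
    (i (-(Real.pi/4)) (7*Real.pi/12))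
    (i (7*Real.pi/12) (2*Real.pi/3))
  have s7 := intervalIntegral.integral_add_adjacent_intervals
    (i (-(Real.pi/4)) (2*Real.pi/3))
    (i (2*Real.pi/3) (3*Real.pi/4))
  have s8 := intervalIntegral.integral_add_adjacent_intervals
    (i (-(Real.pi/4)) (3*Real.pi/4))
    (i (3*Real.pi/4) (5*Real.pi/4))
  have hgh : gH m = ∫ θ in (-(Real.pi/4))..(5*Real.pi/4), Fm m θ := rfl
  rw [hgh, ← s8, ← s7, ← s6, ← s5, ← s4, ← s3, ← s2, ← s1]
  -- numeric conclusion
  have h2le := sqrt_two_le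
  have hpige : (3.141592:ℝ) ≤ Real.pi := Real.pi_gt_d6.le
  linarith only [B1, B2, B3, B4, B5, B6, B7, B8, B9, h2le, hpige, p3_lemma, p5_lemma]


lemma gH_contOn : ContinuousOn gH (Set.Icc (1/2 : ℝ) (999/1000)) := by
  intro x₀ hx₀
  have key : ContinuousWithinAt (fun m => ∫ θ in (-(Real.pi/4))..(5*Real.pi/4), Fm m θ)
      (Set.Icc (1/2 : ℝ) (999/1000)) x₀ := by
    apply intervalIntegral.continuousWithinAt_of_dominated_interval
      (bound := fun _ => (32:ℝ))
    · -- measurability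
      apply Filter.Eventually.of_forall
      intro x
      apply Measurable.aestronglyMeasurable
      apply Measurable.div
      · exact (by continuity : Continuous (fun θ : ℝ => 1 - 2 * Real.sin θ ^ 2)).measurable
      · exact (Real.continuous_sqrt.comp (by continuity :
          Continuous (fun θ : ℝ => 1 - x * Real.sin θ ^ 2))).measurable
    · -- bound
      filter_upwards [eventually_mem_nhdsWithin] with x hx
      apply Filter.Eventually.of_forall
      intro t _
      have hx0 : (0:ℝ) ≤ x := by linarith [hx.1]
      have hx1 : x < 1 := by linarith [hx.2]
      have hd : 0 < 1 - x * Real.sin t ^ 2 := den_pos hx0 hx1 t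
      have hd' : (1:ℝ)/1024 ≤ 1 - x * Real.sin t ^ 2 := by
        nlinarith [s2_le_one t, sq_nonneg (Real.sin t), hx.2]
      have hsd : Real.sqrt (1/1024 : ℝ) ≤ Real.sqrt (1 - x * Real.sin t ^ 2) :=
        Real.sqrt_le_sqrt hd'
      have hsd1024 : Real.sqrt (1/1024 : ℝ) = 1/32 := by
        rw [show (1/1024 : ℝ) = (1/32)^2 by norm_num, Real.sqrt_sq (by norm_num)]
      have hna : |1 - 2 * Real.sin t ^ 2| ≤ 1 := by
        rw [abs_le]
        constructor <;> nlinarith [s2_le_one t, sq_nonneg (Real.sin t)]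
      have : ‖Fm x t‖ = |1 - 2 * Real.sin t ^ 2| / Real.sqrt (1 - x * Real.sin t ^ 2) := by
        rw [Fm, norm_div, Real.norm_eq_abs, Real.norm_eq_abs,
          abs_of_nonneg (Real.sqrt_nonneg _)]
      rw [this]
      calc |1 - 2 * Real.sin t ^ 2| / Real.sqrt (1 - x * Real.sin t ^ 2)
          ≤ 1 / (1/32 : ℝ) := by
            apply div_le_div₀ (by norm_num) hna (by norm_num)
            rw [← hsd1024]; exact hsd
        _ = 32 := by norm_num
    · exact intervalIntegrable_const
    · -- continuity in parameter
      apply Filter.Eventually.of_forall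
      intro t _
      apply ContinuousAt.continuousWithinAt
      have hx0 : (0:ℝ) ≤ x₀ := by linarith [hx₀.1]
      have hx1 : x₀ < 1 := by linarith [hx₀.2]
      have hd : 0 < 1 - x₀ * Real.sin t ^ 2 := den_pos hx0 hx1 t
      apply ContinuousAt.div continuousAt_const
      · exact (Real.continuous_sqrt.comp (by continuity :
          Continuous (fun m : ℝ => 1 - m * Real.sin t ^ 2))).continuousAt
      · exact (Real.sqrt_pos.2 hd).ne'
  exact key


/-- Proposition 2.21: the function
`g(m) = ∫_{−π/4}^{5π/4} (1 − 2 sin²θ)(1 − m sin²θ)^{−1/2} dθ` is strictly decreasing on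
`(0,1)` and has a unique zero `m_H ∈ (0,1)`. -/
theorem stmt13 :
    StrictAntiOn gH (Set.Ioo (0:ℝ) 1) ∧
    ∃! mH : ℝ, mH ∈ Set.Ioo (0:ℝ) 1 ∧ gH mH = 0 := by
  refine ⟨gH_strictAntiOn, ?_⟩
  obtain ⟨mH, hmem, heq⟩ : ∃ mH ∈ Set.Icc (1/2:ℝ) (999/1000), gH mH = 0 := by
    have hIcc := intermediate_value_Icc' (by norm_num : (1/2:ℝ) ≤ 999/1000) gH_contOn
    have h0 : (0:ℝ) ∈ Set.Icc (gH (999/1000)) (gH (1/2)) := ⟨gH_neg.le, gH_pos_half.le⟩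
    obtain ⟨mH, h1, h2⟩ := hIcc h0
    exact ⟨mH, h1, h2⟩
  have hIoo : mH ∈ Set.Ioo (0:ℝ) 1 := ⟨by linarith [hmem.1], by linarith [hmem.2]⟩
  refine ⟨mH, ⟨hIoo, heq⟩, ?_⟩
  rintro m' ⟨hm', hg'⟩
  by_contra hne
  rcases lt_or_gt_of_ne hne with h | h
  · have hlt := gH_strictAntiOn hm' hIoo h
    rw [heq, hg'] at hlt; exact lt_irrefl 0 hlt
  · have hlt := gH_strictAntiOn hIoo hm' h
    rw [heq, hg'] at hlt; exact lt_irrefl 0 hlt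

end
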